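/- If a graph G has layered treewidth at most ℓ with respect to a layering, then G has a layered ℓ-separator with respect to the same layering. -/

import Mathlib

/-- `lay` is a layering of `G`: every edge joins vertices in the same layer
or in consecutive layers. -/
def IsLayering {V : Type*} (G : SimpleGraph V) (lay : V → ℕ) : Prop :=
  ∀ u v : V, G.Adj u v →
    lay u = lay v ∨ lay u + 1 = lay v ∨ lay v + 1 = lay u

/-- `G` has a layered `ℓ`-separator with respect to the layering `lay`: every
subgraph `G'` of `G` contains a set `S` with at most `ℓ` vertices in each layer
such that every connected component of `G' − S` has at most `|V(G')| / 2`
vertices. -/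
def HasLayeredSeparator {V : Type*} (G : SimpleGraph V) (lay : V → ℕ) (ℓ : ℕ) : Prop :=
  ∀ G' : G.Subgraph, ∃ S ⊆ G'.verts,
    (∀ i : ℕ, (S ∩ {v | lay v = i}).ncard ≤ ℓ) ∧
    ∀ c : ((G'.deleteVerts S).coe).ConnectedComponent,
      2 * c.supp.ncard ≤ G'.verts.ncard

/-- `G` has a stack layout with `s` stacks: an injective position function on
the vertices and an assignment of the edges to `s` stacks such that no two
edges in the same stack cross. -/
def HasStackLayout {V : Type*} (G : SimpleGraph V) (s : ℕ) : Prop :=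
  ∃ (pos : V → ℕ) (f : Sym2 V → ℕ), Function.Injective pos ∧
    (∀ v w : V, G.Adj v w → f s(v, w) < s) ∧
    (∀ v w x y : V, G.Adj v w → G.Adj x y → f s(v, w) = f s(x, y) →
      ¬ (pos v < pos x ∧ pos x < pos w ∧ pos w < pos y))

/-- `G` has a queue layout with `q` queues: an injective position function on
the vertices and an assignment of the edges to `q` queues such that no two
edges in the same queue nest. -/
def HasQueueLayout {V : Type*} (G : SimpleGraph V) (q : ℕ) : Prop :=
  ∃ (pos : V → ℕ) (f : Sym2 V → ℕ), Function.Injective pos ∧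
    (∀ v w : V, G.Adj v w → f s(v, w) < q) ∧
    (∀ v w x y : V, G.Adj v w → G.Adj x y → f s(v, w) = f s(x, y) →
      ¬ (pos v < pos x ∧ pos x < pos y ∧ pos y < pos w))

open SimpleGraph

section TreeAux

variable {β : Type} {T : SimpleGraph β}

private lemma tree_bridge (ht : T.IsTree) {a b : β} (hab : T.Adj a b) :
    ¬ (T.deleteEdges {s(a, b)}).Reachable a b := by
  have hbr := (isAcyclic_iff_forall_adj_isBridge.mp ht.IsAcyclic) hab
  rw [isBridge_iff] at hbr
  exact hbr

private lemma side_total {b x a : β} (p : T.Walk x a) : T.Adj a b →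
    (T.deleteEdges {s(a, b)}).Reachable x a ∨ (T.deleteEdges {s(a, b)}).Reachable x b := by
  induction p with
  | nil => exact fun _ => Or.inl (Reachable.refl _)
  | @cons u v a h q ih =>
    intro hab
    by_cases he : s(u, v) = s(a, b)
    · rw [Sym2.eq_iff] at he
      rcases he with ⟨rfl, rfl⟩ | ⟨rfl, rfl⟩
      · exact Or.inl (Reachable.refl _)
      · exact Or.inr (Reachable.refl _)
    · have hadj : (T.deleteEdges {s(a, b)}).Adj u v := by
        rw [SimpleGraph.deleteEdges_adj]
        exact ⟨h, by simpa using he⟩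
      exact (ih hab).imp hadj.reachable.trans hadj.reachable.trans

private lemma cross_edge (ht : T.IsTree) {a b : β} (hab : T.Adj a b) {x y : β}
    (hx : (T.deleteEdges {s(a, b)}).Reachable x a)
    (hy : (T.deleteEdges {s(a, b)}).Reachable y b)
    (p : T.Walk x y) : s(a, b) ∈ p.edges := by
  by_contra hne
  have hr : (T.deleteEdges {s(a, b)}).Reachable x y :=
    ⟨p.toDeleteEdges _ (fun e he => by
      simp only [Set.mem_singleton_iff]
      rintro rfl
      exact hne he)⟩
  exact tree_bridge ht hab ((hx.symm.trans hr).trans hy)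

private lemma dist_lt (ht : T.IsTree) {a b : β} (hab : T.Adj a b) {t : β}
    (hside : (T.deleteEdges {s(a, b)}).Reachable t b) :
    T.dist b t < T.dist a t := by
  classical
  obtain ⟨p, hp⟩ := (ht.isConnected.preconnected a t).exists_walk_length_eq_dist
  have he : s(a, b) ∈ p.edges := cross_edge ht hab (Reachable.refl _) hside p
  have hb : b ∈ p.support := p.snd_mem_support_of_mem_edges he
  have hdrop : T.dist b t ≤ (p.dropUntil b hb).length := T.dist_le _
  have hlen := congrArg Walk.length (p.take_spec hb)
  rw [Walk.length_append] at hlen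
  have htpos : (p.takeUntil b hb).length ≠ 0 := fun h0 => hab.ne (Walk.eq_of_length_eq_zero h0)
  omega

private lemma side_unique (ht : T.IsTree) {a b b' : β} (hab : T.Adj a b) (hab' : T.Adj a b')
    {t : β} (h1 : (T.deleteEdges {s(a, b)}).Reachable t b)
    (h2 : (T.deleteEdges {s(a, b')}).Reachable t b') : b = b' := by
  classical
  by_contra hne
  obtain ⟨q⟩ := h2
  have hqT : ∀ e ∈ q.edges, e ∈ T.edgeSet := fun e he =>
    (SimpleGraph.edgeSet_mono (SimpleGraph.deleteEdges_le _)) (q.edges_subset_edgeSet he)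
  have hep : s(a, b) ∈ (Walk.cons hab' (q.transfer T hqT).reverse).edges :=
    cross_edge ht hab (Reachable.refl _) h1 _
  rw [Walk.edges_cons] at hep
  have hne2 : s(a, b) ≠ s(a, b') := by
    intro h
    rw [Sym2.eq_iff] at h
    rcases h with ⟨-, h2'⟩ | ⟨h1', -⟩
    · exact hne h2'
    · exact hab'.ne h1'
  have heq : s(a, b) ∈ q.edges := by
    rcases List.mem_cons.mp hep with h | h
    · exact absurd h hne2
    · rw [Walk.edges_reverse, List.mem_reverse, Walk.edges_transfer] at h
      exact h
  have ha : a ∈ q.support := q.fst_mem_support_of_mem_edges heq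
  have hta : (T.deleteEdges {s(a, b')}).Reachable t a := ⟨q.takeUntil a ha⟩
  exact tree_bridge ht hab' (hta.symm.trans ⟨q⟩)

private lemma side_nested (ht : T.IsTree) {a b c : β} (hab : T.Adj a b) (hbc : T.Adj b c)
    (hca : c ≠ a) {t : β} (h : (T.deleteEdges {s(b, c)}).Reachable t c) :
    (T.deleteEdges {s(a, b)}).Reachable t b := by
  classical
  obtain ⟨w⟩ := ht.isConnected.preconnected t a
  rcases side_total w hab with hta | htb
  · exfalso
    have hcb : (T.deleteEdges {s(a, b)}).Reachable c b := by
      refine Adj.reachable ?_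
      rw [SimpleGraph.deleteEdges_adj]
      refine ⟨hbc.symm, ?_⟩
      simp only [Set.mem_singleton_iff, Sym2.eq_iff]
      rintro (⟨rfl, -⟩ | ⟨rfl, -⟩)
      · exact hca rfl
      · exact hbc.ne rfl
    obtain ⟨q⟩ := h
    have hqT : ∀ e ∈ q.edges, e ∈ T.edgeSet := fun e he =>
      (SimpleGraph.edgeSet_mono (SimpleGraph.deleteEdges_le _)) (q.edges_subset_edgeSet he)
    have hep : s(a, b) ∈ (q.transfer T hqT).edges := cross_edge ht hab hta hcb _
    have heq : s(a, b) ∈ q.edges := by rwa [Walk.edges_transfer] at hep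
    have hbq : b ∈ q.support := q.snd_mem_support_of_mem_edges heq
    exact tree_bridge ht hbc ⟨q.dropUntil b hbq⟩
  · exact htb

private lemma exists_side {t a : β} (p : T.Walk t a) :
    t ≠ a → ∃ b, T.Adj a b ∧ (T.deleteEdges {s(a, b)}).Reachable t b := by
  induction p with
  | nil => exact fun hta => absurd rfl hta
  | @cons u v a h q ih =>
    intro hta
    by_cases hva : v = a
    · subst hva
      exact ⟨u, h.symm, Reachable.refl _⟩
    · obtain ⟨b, hb, hr⟩ := ih hva
      refine ⟨b, hb, ?_⟩
      have hadj : (T.deleteEdges {s(a, b)}).Adj u v := by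
        rw [SimpleGraph.deleteEdges_adj]
        refine ⟨h, ?_⟩
        simp only [Set.mem_singleton_iff, Sym2.eq_iff]
        rintro (⟨rfl, rfl⟩ | ⟨rfl, rfl⟩)
        · exact hta rfl
        · exact hva rfl
      exact hadj.reachable.trans hr

private lemma connected_side {B : Set β} (hB : (T.induce B).Connected)
    {a : β} (ha : a ∉ B) {b : β} {t₀ : β} (ht₀ : t₀ ∈ B)
    (hr0 : (T.deleteEdges {s(a, b)}).Reachable t₀ b) :
    ∀ t ∈ B, (T.deleteEdges {s(a, b)}).Reachable t b := by
  intro t htB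
  obtain ⟨p⟩ := hB.preconnected ⟨t₀, ht₀⟩ ⟨t, htB⟩
  suffices H : ∀ (x y : ↥B) (_ : (T.induce B).Walk x y),
      (T.deleteEdges {s(a, b)}).Reachable x.val b →
      (T.deleteEdges {s(a, b)}).Reachable y.val b from H _ _ p hr0
  intro x y p
  induction p with
  | nil => exact id
  | @cons u v _ h q ih =>
    intro hu
    apply ih
    have hT : T.Adj u.val v.val := h
    have hadj : (T.deleteEdges {s(a, b)}).Adj u.val v.val := by
      rw [SimpleGraph.deleteEdges_adj]
      refine ⟨hT, ?_⟩
      simp only [Set.mem_singleton_iff, Sym2.eq_iff]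
      rintro (⟨h1, -⟩ | ⟨-, h2⟩)
      · exact ha (h1 ▸ u.2)
      · exact ha (h2 ▸ v.2)
    exact hadj.symm.reachable.trans hu

end TreeAux


/-- If `G` has a tree decomposition in which every bag contains at most `ℓ`
vertices of each layer (i.e. layered treewidth at most `ℓ`), then `G` has a
layered `ℓ`-separator with respect to the same layering. -/
theorem layered_treewidth_gives_layered_separator {V : Type*} [Fintype V]
    (G : SimpleGraph V) (lay : V → ℕ) (ℓ : ℕ) (hlay : IsLayering G lay)
    (h : ∃ (β : Type) (T : SimpleGraph β) (bag : β → Set V),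
      T.IsTree ∧
      (∀ v : V, ∃ b, v ∈ bag b) ∧
      (∀ u v : V, G.Adj u v → ∃ b, u ∈ bag b ∧ v ∈ bag b) ∧
      (∀ v : V, (T.induce {b | v ∈ bag b}).Connected) ∧
      (∀ b, ∀ i : ℕ, (bag b ∩ {v | lay v = i}).ncard ≤ ℓ)) :
    HasLayeredSeparator G lay ℓ := by
  classical
  obtain ⟨β, T, bag, htree, hcover, hedge, hconn, hsize⟩ := h
  intro G'
  set n := G'.verts.ncard with hn
  set W : β → β → Set V := fun a b =>
    {v | v ∈ G'.verts ∧ ∀ t, v ∈ bag t → (T.deleteEdges {s(a, b)}).Reachable t b} with hW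
  have hWmem : ∀ a b v, v ∈ W a b ↔
      (v ∈ G'.verts ∧ ∀ t, v ∈ bag t → (T.deleteEdges {s(a, b)}).Reachable t b) := by
    intro a b v; rfl
  set tb : V → β := fun v => (hcover v).choose with htbdef
  have htb : ∀ v, v ∈ bag (tb v) := fun v => (hcover v).choose_spec
  have hsum : ∀ a b, T.Adj a b → (W a b).ncard + (W b a).ncard ≤ n := by
    intro a b hab
    have hdisj : Disjoint (W a b) (W b a) := by
      rw [Set.disjoint_left]
      intro v h1 h2
      have r1 := ((hWmem a b v).mp h1).2 (tb v) (htb v)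
      have r2 := ((hWmem b a v).mp h2).2 (tb v) (htb v)
      rw [Sym2.eq_swap] at r2
      exact tree_bridge htree hab (r2.symm.trans r1)
    rw [← Set.ncard_union_eq hdisj (Set.toFinite _) (Set.toFinite _)]
    exact Set.ncard_le_ncard
      (Set.union_subset (fun v hv => ((hWmem a b v).mp hv).1)
        (fun v hv => ((hWmem b a v).mp hv).1)) (Set.toFinite _)
  -- Step 1: there is a "good" node
  have hstep1 : ∃ a : β, ∀ b, T.Adj a b → 2 * (W a b).ncard ≤ n := by
    by_contra hbad
    push_neg at hbad
    have key : ∀ k a b, T.Adj a b → n < 2 * (W a b).ncard →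
        ((W a b).toFinset.sup fun v => T.dist a (tb v)) < k → False := by
      intro k
      induction k with
      | zero => intro a b _ _ hk; omega
      | succ k ih =>
        intro a b hab hcard hk
        obtain ⟨c, hbc, hc⟩ := hbad b
        have hca : c ≠ a := by
          intro hh
          rw [hh] at hc
          have := hsum a b hab
          omega
        have hsub : W b c ⊆ W a b := by
          intro v hv
          rw [hWmem] at hv ⊢
          exact ⟨hv.1, fun t htv => side_nested htree hab hbc hca (hv.2 t htv)⟩
        have hne : (W b c).Nonempty := by
          rcases Set.eq_empty_or_nonempty (W b c) with h0 | h0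
          · rw [h0, Set.ncard_empty] at hc; omega
          · exact h0
        have hlt : ((W b c).toFinset.sup fun v => T.dist b (tb v)) <
            ((W a b).toFinset.sup fun v => T.dist a (tb v)) := by
          obtain ⟨v₁, hv₁⟩ := hne
          have hdl : ∀ v ∈ W b c, T.dist b (tb v) < T.dist a (tb v) := by
            intro v hv
            exact dist_lt htree hab (((hWmem a b v).mp (hsub hv)).2 _ (htb v))
          have hpos : 0 < ((W a b).toFinset.sup fun v => T.dist a (tb v)) := by
            have hle : T.dist a (tb v₁) ≤ ((W a b).toFinset.sup fun v => T.dist a (tb v)) :=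
              Finset.le_sup (f := fun v => T.dist a (tb v)) (Set.mem_toFinset.mpr (hsub hv₁))
            have := hdl v₁ hv₁
            omega
          rw [Finset.sup_lt_iff hpos]
          intro v hv
          rw [Set.mem_toFinset] at hv
          have hle : T.dist a (tb v) ≤ ((W a b).toFinset.sup fun v => T.dist a (tb v)) :=
            Finset.le_sup (f := fun v => T.dist a (tb v)) (Set.mem_toFinset.mpr (hsub hv))
          have := hdl v hv
          omega
        exact ih b c hbc hc (by omega)
    obtain ⟨a₀⟩ := htree.isConnected.nonempty
    obtain ⟨b₀, hab₀, hc₀⟩ := hbad a₀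
    exact key (((W a₀ b₀).toFinset.sup fun v => T.dist a₀ (tb v)) + 1) a₀ b₀ hab₀ hc₀
      (Nat.lt_succ_self _)
  obtain ⟨a, hgood⟩ := hstep1
  -- Step 2: the bag of the good node is a balanced separator
  have hside : ∀ u : V, u ∈ G'.verts → u ∉ bag a → ∃ b, T.Adj a b ∧ u ∈ W a b := by
    intro u hu1 hu2
    have hta : tb u ≠ a := fun h => hu2 (h ▸ htb u)
    obtain ⟨p⟩ := htree.isConnected.preconnected (tb u) a
    obtain ⟨b, hb, hr⟩ := exists_side p hta
    refine ⟨b, hb, ?_⟩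
    rw [hWmem]
    exact ⟨hu1, connected_side (hconn u) hu2 (htb u) hr⟩
  refine ⟨G'.verts ∩ bag a, Set.inter_subset_left, ?_, ?_⟩
  · intro i
    refine le_trans (Set.ncard_le_ncard ?_ (Set.toFinite _)) (hsize a i)
    exact fun v hv => ⟨hv.1.2, hv.2⟩
  · intro c
    obtain ⟨x, hx⟩ := c.exists_rep
    have hxv : x.val ∈ G'.verts ∧ x.val ∉ bag a := by
      have hx2 : x.val ∈ G'.verts \ (G'.verts ∩ bag a) := x.2
      exact ⟨hx2.1, fun hbag => hx2.2 ⟨hx2.1, hbag⟩⟩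
    obtain ⟨b, hab, hxW⟩ := hside x.val hxv.1 hxv.2
    -- every vertex of the component lies in W a b
    have hkey : ∀ (u w : ↥((G'.deleteVerts (G'.verts ∩ bag a)).verts))
        (_ : ((G'.deleteVerts (G'.verts ∩ bag a)).coe).Walk u w),
        u.val ∈ W a b → w.val ∈ W a b := by
      intro u w p
      induction p with
      | nil => exact id
      | @cons u v _ hadj q ih =>
        intro hu
        apply ih
        have hGadj : G.Adj u.val v.val := ((G'.deleteVerts (G'.verts ∩ bag a)).coe_adj_sub u v hadj)
        obtain ⟨t', ht'u, ht'v⟩ := hedge u.val v.val hGadj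
        have hvv : v.val ∈ G'.verts ∧ v.val ∉ bag a := by
          have hv2 : v.val ∈ G'.verts \ (G'.verts ∩ bag a) := v.2
          exact ⟨hv2.1, fun hbag => hv2.2 ⟨hv2.1, hbag⟩⟩
        obtain ⟨b', hab', hvW⟩ := hside v.val hvv.1 hvv.2
        have hbb' : b = b' :=
          side_unique htree hab hab' (((hWmem a b _).mp hu).2 t' ht'u)
            (((hWmem a b' _).mp hvW).2 t' ht'v)
        rw [hbb']
        exact hvW
    have himg : Subtype.val '' c.supp ⊆ W a b := by
      rintro u ⟨y, hy, rfl⟩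
      rw [ConnectedComponent.mem_supp_iff, ← hx] at hy
      obtain ⟨p⟩ := (ConnectedComponent.exact hy.symm :
        ((G'.deleteVerts (G'.verts ∩ bag a)).coe).Reachable x y)
      exact hkey x y p hxW
    have hcard : c.supp.ncard ≤ (W a b).ncard := by
      rw [← Set.ncard_image_of_injective c.supp Subtype.val_injective]
      exact Set.ncard_le_ncard himg (Set.toFinite _)
    have := hgood b hab
    omega
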